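/- arXiv:2602.16209 — 2 statements merged into one kernel-verified Lean document; each statement's English description precedes it below -/
import Mathlib

section
/- Let L be a natural number, let A₀, …, A_{L−1} be real C × C skew-symmetric matrices, let α be a real number, and let z₀ ∈ ℝ^C. Define the sequence z_{l+1} = (I + α A_l) z_l for l = 0, …, L−1. Then ‖z_L‖₂ ≤ (∏_{l=0}^{L−1} sqrt(1 + α² ‖A_l‖₂²)) · ‖z₀‖₂. -/
open Matrix

/-- The operator norm of a real square matrix induced by the Euclidean norm. -/
noncomputable def opNorm2 {C : ℕ} (A : Matrix (Fin C) (Fin C) ℝ) : ℝ :=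
  ‖Matrix.toEuclideanCLM (𝕜 := ℝ) A‖

open scoped RealInnerProductSpace

lemma step_bound {C : ℕ} (A : Matrix (Fin C) (Fin C) ℝ) (hA : Aᵀ = -A) (α : ℝ)
    (x : EuclideanSpace ℝ (Fin C)) :
    ‖Matrix.toEuclideanCLM (𝕜 := ℝ) (1 + α • A) x‖
      ≤ Real.sqrt (1 + α ^ 2 * opNorm2 A ^ 2) * ‖x‖ := by
  set T := Matrix.toEuclideanCLM (𝕜 := ℝ) A with hT
  have hstar : star A = -A := by simpa [Matrix.star_eq_conjTranspose] using hA
  have hadj : ContinuousLinearMap.adjoint T = -T := by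
    rw [hT, ← ContinuousLinearMap.star_eq_adjoint, ← map_star, hstar, map_neg]
  have hinner : ⟪x, T x⟫ = 0 := by
    have h1 : ⟪x, T x⟫ = ⟪T x, x⟫ := real_inner_comm _ _
    have h2 : ⟪x, T x⟫ = ⟪ContinuousLinearMap.adjoint T x, x⟫ :=
      (ContinuousLinearMap.adjoint_inner_left T x x).symm
    rw [hadj] at h2
    simp only [ContinuousLinearMap.neg_apply, inner_neg_left] at h2
    rw [← h1] at h2
    linarith
  have happ : Matrix.toEuclideanCLM (𝕜 := ℝ) (1 + α • A) x = x + α • T x := by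
    rw [map_add, _root_.map_smul, _root_.map_one]
    simp [hT]
  rw [happ]
  have hsq : ‖x + α • T x‖ ^ 2 = ‖x‖ ^ 2 + α ^ 2 * ‖T x‖ ^ 2 := by
    rw [norm_add_sq_real]
    rw [real_inner_smul_right, hinner, norm_smul]
    simp [mul_pow]
    try ring
  have hTx : ‖T x‖ ≤ opNorm2 A * ‖x‖ := T.le_opNorm x
  have hbound : ‖x + α • T x‖ ^ 2 ≤ (1 + α ^ 2 * opNorm2 A ^ 2) * ‖x‖ ^ 2 := by
    rw [hsq]
    have : α ^ 2 * ‖T x‖ ^ 2 ≤ α ^ 2 * (opNorm2 A * ‖x‖) ^ 2 := by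
      apply mul_le_mul_of_nonneg_left _ (sq_nonneg α)
      exact pow_le_pow_left₀ (norm_nonneg _) hTx 2
    nlinarith
  have h1 : ‖x + α • T x‖ = Real.sqrt (‖x + α • T x‖ ^ 2) := by
    rw [Real.sqrt_sq (norm_nonneg _)]
  rw [h1]
  calc Real.sqrt (‖x + α • T x‖ ^ 2) ≤ Real.sqrt ((1 + α ^ 2 * opNorm2 A ^ 2) * ‖x‖ ^ 2) :=
        Real.sqrt_le_sqrt hbound
    _ = Real.sqrt (1 + α ^ 2 * opNorm2 A ^ 2) * ‖x‖ := by
        rw [Real.sqrt_mul (by positivity), Real.sqrt_sq (norm_nonneg _)]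

/-- Multi-layer composition growth bound: for skew-symmetric generators `A_l` and
updates `z_{l+1} = (I + α A_l) z_l`, one has
`‖z_L‖₂ ≤ (∏_{l<L} sqrt(1 + α² ‖A_l‖₂²)) · ‖z₀‖₂`. -/
theorem multi_layer_growth_bound (C L : ℕ) (A : ℕ → Matrix (Fin C) (Fin C) ℝ)
    (hA : ∀ l, (A l)ᵀ = -(A l)) (α : ℝ) (z : ℕ → EuclideanSpace ℝ (Fin C))
    (hz : ∀ l < L, z (l + 1)
      = (WithLp.toLp 2 (((1 : Matrix (Fin C) (Fin C) ℝ) + α • A l).mulVec (z l) : Fin C → ℝ) :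
          EuclideanSpace ℝ (Fin C))) :
    ‖z L‖ ≤ (∏ l ∈ Finset.range L, Real.sqrt (1 + α ^ 2 * opNorm2 (A l) ^ 2)) * ‖z 0‖ := by
  induction L with
  | zero => simp
  | succ n ih =>
    have hzn := hz n (Nat.lt_succ_self n)
    have hCLM : z (n + 1) = Matrix.toEuclideanCLM (𝕜 := ℝ) (1 + α • A n) (z n) := by
      rw [hzn]; rfl
    have hstep : ‖z (n + 1)‖ ≤ Real.sqrt (1 + α ^ 2 * opNorm2 (A n) ^ 2) * ‖z n‖ := by
      rw [hCLM]; exact step_bound (A n) (hA n) α (z n)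
    have ih' := ih (fun l hl => hz l (hl.trans (Nat.lt_succ_self n)))
    rw [Finset.prod_range_succ]
    calc ‖z (n + 1)‖ ≤ Real.sqrt (1 + α ^ 2 * opNorm2 (A n) ^ 2) * ‖z n‖ := hstep
      _ ≤ Real.sqrt (1 + α ^ 2 * opNorm2 (A n) ^ 2) *
            ((∏ l ∈ Finset.range n, Real.sqrt (1 + α ^ 2 * opNorm2 (A l) ^ 2)) * ‖z 0‖) :=
          mul_le_mul_of_nonneg_left ih' (Real.sqrt_nonneg _)
      _ = _ := by ring
end

section
/- Let L be a natural number, let A₀, …, A_{L−1} be real C × C skew-symmetric matrices, let α and M ≥ 0 be real numbers with ‖A_l‖₂ ≤ M for all l, and let z₀ ∈ ℝ^C. Define z_{l+1} = (I + α A_l) z_l for l = 0, …, L−1. Then ‖z_L‖₂ ≤ exp((L/2) α² M²) · ‖z₀‖₂. -/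
open Matrix

lemma step_bound_s10 {C : ℕ} (B : Matrix (Fin C) (Fin C) ℝ) (hB : Bᵀ = -B) (α M : ℝ)
    (hBM : opNorm2 B ≤ M) (v w : EuclideanSpace ℝ (Fin C))
    (hvw : w = (WithLp.equiv 2 (Fin C → ℝ)).symm
      ((((1 : Matrix (Fin C) (Fin C) ℝ) + α • B).mulVec ((WithLp.equiv 2 (Fin C → ℝ)) v)))) :
    ‖w‖ ≤ Real.exp (α ^ 2 * M ^ 2 / 2) * ‖v‖ := by
  set u : EuclideanSpace ℝ (Fin C) :=
    ((WithLp.equiv 2 (Fin C → ℝ)).symm (B.mulVec (v : Fin C → ℝ)))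
  have hu : u = Matrix.toEuclideanCLM (𝕜 := ℝ) B ((WithLp.equiv 2 _).symm ((WithLp.equiv 2 _) v)) := by
    rfl
  have hunorm : ‖u‖ ≤ M * ‖v‖ := by
    rw [hu]
    simp only [(WithLp.equiv 2 _).symm_apply_apply]
    calc ‖Matrix.toEuclideanCLM (𝕜 := ℝ) B v‖ ≤ ‖Matrix.toEuclideanCLM (𝕜 := ℝ) B‖ * ‖v‖ :=
          (Matrix.toEuclideanCLM (𝕜 := ℝ) B).le_opNorm v
      _ ≤ M * ‖v‖ := by gcongr; exact hBM
  have hw : w = v + α • u := by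
    rw [hvw]
    simp only [Matrix.add_mulVec, Matrix.one_mulVec, Matrix.smul_mulVec]
    rfl
  have horth : inner (𝕜 := ℝ) v u = 0 := by
    have h1 : inner (𝕜 := ℝ) v u = dotProduct (v : Fin C → ℝ) (B.mulVec v) := by
      simp [u, EuclideanSpace.inner_eq_star_dotProduct]
      exact dotProduct_comm _ _
    have h2 : dotProduct (v : Fin C → ℝ) (B.mulVec v)
        = dotProduct (Bᵀ.mulVec v) (v : Fin C → ℝ) := by
      rw [dotProduct_mulVec, Matrix.mulVec_transpose, dotProduct_comm]
    rw [hB] at h2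
    have h3 : dotProduct ((-B).mulVec (v : Fin C → ℝ)) (v : Fin C → ℝ)
        = - dotProduct (B.mulVec v) (v : Fin C → ℝ) := by
      simp [Matrix.neg_mulVec]
    rw [h3, dotProduct_comm] at h2
    rw [h1]
    linarith [h2, dotProduct_comm (v : Fin C → ℝ) (B.mulVec v)]
  have hM0 : (0:ℝ) ≤ M := le_trans (norm_nonneg _) hBM
  have hnormsq : ‖v + α • u‖ ^ 2 = ‖v‖ ^ 2 + α ^ 2 * ‖u‖ ^ 2 := by
    have := norm_add_sq_real v (α • u)
    rw [inner_smul_right, horth] at this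
    simp [this, norm_smul, mul_pow]
  have hsq : ‖v + α • u‖ ^ 2 ≤ (1 + α ^ 2 * M ^ 2) * ‖v‖ ^ 2 := by
    rw [hnormsq]
    have : ‖u‖ ^ 2 ≤ M ^ 2 * ‖v‖ ^ 2 := by
      rw [← mul_pow]; exact pow_le_pow_left₀ (norm_nonneg _) hunorm 2
    nlinarith [sq_nonneg α]
  have hexp : (1 + α ^ 2 * M ^ 2) ≤ Real.exp (α ^ 2 * M ^ 2) := by
    linarith [Real.add_one_le_exp (α ^ 2 * M ^ 2)]
  have hsq2 : ‖v + α • u‖ ^ 2 ≤ (Real.exp (α ^ 2 * M ^ 2 / 2) * ‖v‖) ^ 2 := by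
    have : (Real.exp (α ^ 2 * M ^ 2 / 2) * ‖v‖) ^ 2
        = Real.exp (α ^ 2 * M ^ 2) * ‖v‖ ^ 2 := by
      rw [mul_pow, ← Real.exp_nat_mul]; ring_nf
    rw [this]
    calc ‖v + α • u‖ ^ 2 ≤ (1 + α ^ 2 * M ^ 2) * ‖v‖ ^ 2 := hsq
      _ ≤ Real.exp (α ^ 2 * M ^ 2) * ‖v‖ ^ 2 := by gcongr
  rw [hw]
  have := Real.sqrt_le_sqrt hsq2
  rw [Real.sqrt_sq (norm_nonneg _), Real.sqrt_sq (by positivity)] at this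
  exact this

/-- Exponential multi-layer growth bound: for skew-symmetric generators `A_l` with
`‖A_l‖₂ ≤ M` and updates `z_{l+1} = (I + α A_l) z_l`, one has
`‖z_L‖₂ ≤ exp((L/2) α² M²) · ‖z₀‖₂`. -/
theorem exponential_multi_layer_growth_bound (C L : ℕ) (A : ℕ → Matrix (Fin C) (Fin C) ℝ)
    (hA : ∀ l, (A l)ᵀ = -(A l)) (α M : ℝ) (hM : 0 ≤ M)
    (hAM : ∀ l, opNorm2 (A l) ≤ M) (z : ℕ → EuclideanSpace ℝ (Fin C))
    (hz : ∀ l < L, z (l + 1)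
      = (WithLp.toLp 2 (((1 : Matrix (Fin C) (Fin C) ℝ) + α • A l).mulVec (z l) : Fin C → ℝ) :
          EuclideanSpace ℝ (Fin C))) :
    ‖z L‖ ≤ Real.exp ((L : ℝ) / 2 * α ^ 2 * M ^ 2) * ‖z 0‖ := by
  induction L with
  | zero => simp
  | succ L ih =>
    have hstep : ‖z (L + 1)‖ ≤ Real.exp (α ^ 2 * M ^ 2 / 2) * ‖z L‖ :=
      step_bound_s10 (A L) (hA L) α M (hAM L) (z L) (z (L + 1)) (hz L (Nat.lt_succ_self L))
    have ihL := ih (fun l hl => hz l (Nat.lt_succ_of_lt hl))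
    calc ‖z (L + 1)‖ ≤ Real.exp (α ^ 2 * M ^ 2 / 2) * ‖z L‖ := hstep
      _ ≤ Real.exp (α ^ 2 * M ^ 2 / 2) * (Real.exp ((L : ℝ) / 2 * α ^ 2 * M ^ 2) * ‖z 0‖) := by
          gcongr
      _ = Real.exp (((L : ℕ) + 1 : ℝ) / 2 * α ^ 2 * M ^ 2) * ‖z 0‖ := by
          rw [← mul_assoc, ← Real.exp_add]; ring_nf
      _ = Real.exp (((L + 1 : ℕ) : ℝ) / 2 * α ^ 2 * M ^ 2) * ‖z 0‖ := by push_cast; ring_nf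
end
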